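/- For every natural number k ≥ 1, the abelianization of the group defined by the presentation ⟨u, t | (ut⁻²)ᵏ = 1, tut⁻¹u⁻² = 1⟩ is a cyclic group of order 2k (that is, it is isomorphic to Multiplicative (ZMod (2k))). -/

import Mathlib

/-- Relators for the presentation `⟨u, t | (ut⁻²)ᵏ, tut⁻¹u⁻²⟩`,
with generators `u = 0`, `t = 1`. -/
def relsUT (k : ℕ) : Set (FreeGroup (Fin 2)) :=
  let u : FreeGroup (Fin 2) := FreeGroup.of 0
  let t : FreeGroup (Fin 2) := FreeGroup.of 1
  {(u * t⁻¹ * t⁻¹) ^ k, t * u * t⁻¹ * u⁻¹ * u⁻¹}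

theorem abelianization_relsUT (k : ℕ) (hk : 1 ≤ k) :
    Nonempty (Abelianization (PresentedGroup (relsUT k)) ≃*
      Multiplicative (ZMod (2 * k))) := by
  classical
  set n := 2 * k with hn
  -- the forward map
  let f : Fin 2 → Multiplicative (ZMod n) := ![1, Multiplicative.ofAdd 1]
  have hf : ∀ r ∈ relsUT k, FreeGroup.lift f r = 1 := by
    intro r hr
    rcases hr with rfl | rfl
    · simp only [map_pow, map_mul, map_inv, FreeGroup.lift_apply_of, f,
        Matrix.cons_val_zero, Matrix.cons_val_one, Matrix.head_cons, one_mul]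
      rw [← ofAdd_neg, ← ofAdd_add, ← ofAdd_nsmul]
      have h2 : ((2 * k : ℕ) : ZMod n) = 0 := by rw [← hn]; exact ZMod.natCast_self n
      push_cast at h2
      have : (k : ℕ) • ((-1 : ZMod n) + -1) = 0 := by
        rw [nsmul_eq_mul]
        linear_combination -h2
      rw [this]; rfl
    · simp only [map_mul, map_inv, FreeGroup.lift_apply_of, f,
        Matrix.cons_val_zero, Matrix.cons_val_one, Matrix.head_cons]
      group
  let φ₀ : PresentedGroup (relsUT k) →* Multiplicative (ZMod n) := PresentedGroup.toGroup hf
  let φ : Abelianization (PresentedGroup (relsUT k)) →* Multiplicative (ZMod n) :=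
    Abelianization.lift φ₀
  -- relators hold in the presented group
  have hrel : ∀ r ∈ relsUT k, (PresentedGroup.mk (relsUT k) r) = 1 := fun r hr =>
    (QuotientGroup.eq_one_iff r).mpr (Subgroup.subset_normalClosure hr)
  set u₀ : Abelianization (PresentedGroup (relsUT k)) :=
    Abelianization.of (PresentedGroup.of 0) with hu₀
  set t₀ : Abelianization (PresentedGroup (relsUT k)) :=
    Abelianization.of (PresentedGroup.of 1) with ht₀
  have hu1 : u₀ = 1 := by
    have h := hrel _ (Set.mem_insert_of_mem _ rfl)
    have key : t₀ * u₀ * t₀⁻¹ * u₀⁻¹ * u₀⁻¹ = 1 := by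
      have h2 := congrArg Abelianization.of h
      simp only [map_mul, map_inv, map_one] at h2; exact h2
    have hcomm : t₀ * u₀ * t₀⁻¹ = u₀ := by
      rw [mul_comm t₀ u₀, mul_assoc, mul_inv_cancel, mul_one]
    rw [hcomm, mul_inv_cancel, one_mul] at key
    exact inv_injective (by simpa using key)
  have ht2k : t₀ ^ (n : ℕ) = 1 := by
    have h := hrel _ (Set.mem_insert _ _)
    have key : (u₀ * t₀⁻¹ * t₀⁻¹) ^ k = 1 := by
      have h2 := congrArg Abelianization.of h
      simp only [map_pow, map_mul, map_inv, map_one] at h2; exact h2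
    rw [hu1, one_mul, ← mul_inv_rev, ← pow_two, inv_pow, inv_eq_one] at key
    rw [hn, pow_mul]
    exact key
  -- the inverse map via `ZMod.lift`
  let g : ℤ →+ Additive (Abelianization (PresentedGroup (relsUT k))) :=
    zmultiplesHom _ (Additive.ofMul t₀)
  have hg : g (n : ℤ) = 0 := by
    show ((n : ℤ) • Additive.ofMul t₀) = 0
    rw [← ofMul_zpow, zpow_natCast, ht2k]
    rfl
  let ψ₀ : ZMod n →+ Additive (Abelianization (PresentedGroup (relsUT k))) :=
    ZMod.lift n ⟨g, hg⟩
  let ψ : Multiplicative (ZMod n) →* Abelianization (PresentedGroup (relsUT k)) :=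
    AddMonoidHom.toMultiplicativeLeft ψ₀
  have hψ : ∀ m : ℤ, ψ (Multiplicative.ofAdd ((m : ZMod n))) = t₀ ^ m := by
    intro m
    show Additive.toMul (ψ₀ ((m : ZMod n))) = t₀ ^ m
    rw [show ψ₀ ((m : ZMod n)) = g m from ZMod.lift_coe n _ m]
    rfl
  have hφt : φ t₀ = Multiplicative.ofAdd 1 := by
    rw [ht₀]
    show φ₀ (PresentedGroup.of 1) = _
    simp [φ₀, f]
  have hφu : φ u₀ = 1 := by
    rw [hu₀]
    show φ₀ (PresentedGroup.of 0) = _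
    simp [φ₀, f]
  refine ⟨MonoidHom.toMulEquiv φ ψ ?_ ?_⟩
  · apply Abelianization.hom_ext
    apply PresentedGroup.ext
    intro x
    fin_cases x
    · show ψ (φ u₀) = u₀
      rw [hφu, hu1]
      exact map_one ψ
    · show ψ (φ t₀) = t₀
      rw [hφt]
      simpa using hψ 1
  · apply MonoidHom.ext
    intro x
    obtain ⟨m, hm⟩ := ZMod.intCast_surjective (Multiplicative.toAdd x)
    have hx : x = Multiplicative.ofAdd ((m : ZMod n)) := by rw [hm]; exact (ofAdd_toAdd x).symm
    rw [MonoidHom.comp_apply, hx, hψ m, map_zpow, hφt, ← ofAdd_zsmul, MonoidHom.id_apply]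
    norm_num
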